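/- Let (C_k)_{k≥0} be a sequence of Laurent polynomials with integer coefficients such that there exist positive constants A, B, D with ℓ¹-norm ‖C_k‖₁ ≤ e^{A k + B log k} and support of C_k contained in [−D k², D k²] for all k ≥ 1. For k ≥ 0 and α, ε ∈ ℂ define g_k(α, ε) = (∏_{j=1}^{k} ((e^{α/2} − e^{−α/2})² − (e^{jε/2} − e^{−jε/2})²)) · C_k(e^{ε}). Then there exists an open neighborhood U of 0 in ℂ such that for every integer N ≥ 1 there exists a constant M'_N > 0 with the following property: for all integers n ≥ 1 and all α ∈ U, the series ∑_{k=0}^{∞} ∑_{j=0}^{N−1} (1/j!) · (∂^j g_k/∂ε^j)(α, 0) · (α/n)^j converges absolutely and its tail satisfies |∑_{k=n+1}^{∞} ∑_{j=0}^{N−1} (1/j!) · (∂^j g_k/∂ε^j)(α, 0) · (α/n)^j| ≤ M'_N. -/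

import Mathlib

/-- The evaluation of an integer Laurent polynomial (a finitely supported function `ℤ → ℤ`)
at a complex number `q`: `∑_j a_j q^j`. -/
noncomputable def laurentEval (c : ℤ →₀ ℤ) (q : ℂ) : ℂ :=
  ∑ j ∈ c.support, (c j : ℂ) * q ^ j

/-- The ℓ¹-norm of an integer Laurent polynomial: `∑_j |a_j|`. -/
noncomputable def laurentL1 (c : ℤ →₀ ℤ) : ℝ :=
  ∑ j ∈ c.support, |(c j : ℝ)|

/-- `g_k(α, ε) = (∏_{j=1}^{k} ((e^{α/2} − e^{−α/2})² − (e^{jε/2} − e^{−jε/2})²)) · C_k(e^ε)`. -/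
noncomputable def gAux (C : ℕ → (ℤ →₀ ℤ)) (k : ℕ) (α ε : ℂ) : ℂ :=
  (∏ j ∈ Finset.Icc 1 k,
    ((Complex.exp (α / 2) - Complex.exp (-α / 2)) ^ 2
      - (Complex.exp ((j : ℂ) * ε / 2) - Complex.exp (-((j : ℂ) * ε / 2))) ^ 2)) *
    laurentEval (C k) (Complex.exp ε)

open Complex Finset

/-- Cauchy estimate for entire functions. -/
lemma cauchy_est {f : ℂ → ℂ} (hf : Differentiable ℂ f) {R S : ℝ} (hR : 0 < R)
    (hS : ∀ z : ℂ, ‖z‖ = R → ‖f z‖ ≤ S) (j : ℕ) :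
    ‖iteratedDeriv j f 0‖ ≤ j.factorial * S / R ^ j := by
  have hS0 : 0 ≤ S := le_trans (norm_nonneg _) (hS (R : ℂ) (by simpa using abs_of_pos hR))
  lift R to NNReal using hR.le with R₀ hR₀
  have hRpos : (0 : NNReal) < R₀ := by exact_mod_cast hR
  have h := hf.hasFPowerSeriesOnBall 0 hRpos
  have h1 : (j.factorial : ℂ) * (cauchyPowerSeries f 0 R₀ j fun _ => (1 : ℂ))
      = iteratedDeriv j f 0 := by
    have := h.factorial_smul (1 : ℂ) j
    rw [iteratedDeriv_eq_iteratedFDeriv]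
    simpa [nsmul_eq_mul] using this
  have h2 : ‖cauchyPowerSeries f 0 R₀ j fun _ => (1 : ℂ)‖
      ≤ ‖cauchyPowerSeries f 0 R₀ j‖ := by
    have := (cauchyPowerSeries f 0 R₀ j).le_opNorm (fun _ => (1 : ℂ))
    simpa using this
  have hint : IntervalIntegrable (fun θ : ℝ => ‖f (circleMap 0 R₀ θ)‖)
      MeasureTheory.volume 0 (2 * Real.pi) :=
    ((hf.continuous.comp (continuous_circleMap 0 R₀)).norm).intervalIntegrable _ _
  have h3 : (∫ θ : ℝ in (0)..2 * Real.pi, ‖f (circleMap 0 R₀ θ)‖) ≤ 2 * Real.pi * S := by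
    have := intervalIntegral.integral_mono_on (a := (0:ℝ)) (b := 2 * Real.pi)
      Real.two_pi_pos.le hint intervalIntegrable_const
      (fun θ _ => by
        have : ‖circleMap 0 R₀ θ‖ = R₀ := by
          simpa using norm_circleMap_zero (R₀ : ℝ) θ |>.trans (abs_of_pos hR)
        simpa using hS _ this)
    simpa [mul_comm] using this
  have h4 := norm_cauchyPowerSeries_le f 0 R₀ j
  have h5 : ‖cauchyPowerSeries f 0 R₀ j‖ ≤ S / (R₀ : ℝ) ^ j := by
    refine h4.trans ?_
    rw [div_eq_mul_inv, ← inv_pow, abs_of_pos hR]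
    refine mul_le_mul_of_nonneg_right ?_ (by positivity)
    calc (2 * Real.pi)⁻¹ * ∫ θ : ℝ in (0)..2 * Real.pi, ‖f (circleMap 0 R₀ θ)‖
        ≤ (2 * Real.pi)⁻¹ * (2 * Real.pi * S) := mul_le_mul_of_nonneg_left h3 (by positivity)
      _ = S := by field_simp
  calc ‖iteratedDeriv j f 0‖
      = (j.factorial : ℝ) * ‖cauchyPowerSeries f 0 R₀ j fun _ => (1 : ℂ)‖ := by
        rw [← h1]; simp [norm_mul]
    _ ≤ (j.factorial : ℝ) * (S / (R₀ : ℝ) ^ j) := by gcongr; exact h2.trans h5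
    _ = j.factorial * S / (R₀ : ℝ) ^ j := by ring

lemma sinh_bd (w : ℂ) (hw : ‖w‖ ≤ 1 / 2) :
    ‖Complex.exp w - Complex.exp (-w)‖ ≤ 12 * ‖w‖ := by
  have key : Complex.exp w - Complex.exp (-w) = Complex.exp (-w) * (Complex.exp (2 * w) - 1) := by
    rw [mul_sub, ← Complex.exp_add, mul_one]; ring_nf
  rw [key, norm_mul]
  have h1 : ‖Complex.exp (-w)‖ ≤ 3 := by
    rw [Complex.norm_exp]
    have : (-w).re ≤ 1 := by
      calc (-w).re ≤ |(-w).re| := le_abs_self _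
        _ ≤ ‖-w‖ := Complex.abs_re_le_norm _
        _ = ‖w‖ := norm_neg w
        _ ≤ 1 := hw.trans (by norm_num)
    calc Real.exp (-w).re ≤ Real.exp 1 := Real.exp_le_exp.2 this
      _ ≤ 3 := by
          have := Real.exp_one_lt_d9
          linarith
  have h2 : ‖Complex.exp (2 * w) - 1‖ ≤ 2 * ‖2 * w‖ :=
    Complex.norm_exp_sub_one_le (by rw [norm_mul]; simpa using by linarith [hw, norm_nonneg w])
  calc ‖Complex.exp (-w)‖ * ‖Complex.exp (2 * w) - 1‖
      ≤ 3 * (2 * ‖2 * w‖) := by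
        exact mul_le_mul h1 h2 (norm_nonneg _) (by norm_num)
    _ = 12 * ‖w‖ := by rw [norm_mul]; simp; ring

lemma laurent_exp_eq (c : ℤ →₀ ℤ) (ε : ℂ) :
    laurentEval c (Complex.exp ε) = ∑ j ∈ c.support, (c j : ℂ) * Complex.exp ((j : ℂ) * ε) := by
  unfold laurentEval
  exact Finset.sum_congr rfl fun j _ => by rw [Complex.exp_int_mul]

lemma gAux_diff (C : ℕ → (ℤ →₀ ℤ)) (k : ℕ) (α : ℂ) : Differentiable ℂ (gAux C k α) := by
  have hrep : gAux C k α = fun ε =>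
      (∏ j ∈ Finset.Icc 1 k,
        ((Complex.exp (α / 2) - Complex.exp (-α / 2)) ^ 2
          - (Complex.exp ((j : ℂ) * ε / 2) - Complex.exp (-((j : ℂ) * ε / 2))) ^ 2)) *
      ∑ j ∈ (C k).support, ((C k) j : ℂ) * Complex.exp ((j : ℂ) * ε) :=
    funext fun ε => by rw [gAux, laurent_exp_eq]
  rw [hrep]
  apply Differentiable.mul
  · apply Differentiable.fun_finsetProd
    intro j _
    apply (differentiable_const _).sub
    apply Differentiable.pow
    exact (((differentiable_id.const_mul ((j : ℂ))).div_const 2).cexp).sub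
      ((((differentiable_id.const_mul ((j : ℂ))).div_const 2).neg).cexp)
  · apply Differentiable.fun_sum
    intro j _
    exact (differentiable_const _).mul ((differentiable_id.const_mul ((j : ℂ))).cexp)

lemma laurent_bd (c : ℤ →₀ ℤ) (ε : ℂ) {T : ℝ}
    (hT : ∀ j ∈ c.support, |(j : ℝ)| * ‖ε‖ ≤ T) :
    ‖laurentEval c (Complex.exp ε)‖ ≤ laurentL1 c * Real.exp T := by
  rw [laurent_exp_eq, laurentL1, Finset.sum_mul]
  refine (norm_sum_le _ _).trans (Finset.sum_le_sum fun j hj => ?_)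
  rw [norm_mul, Complex.norm_exp, Complex.norm_intCast]
  refine mul_le_mul_of_nonneg_left (Real.exp_le_exp.2 ?_) (abs_nonneg _)
  calc ((j : ℂ) * ε).re ≤ |((j : ℂ) * ε).re| := le_abs_self _
      _ ≤ ‖(j : ℂ) * ε‖ := Complex.abs_re_le_norm _
      _ = |(j : ℝ)| * ‖ε‖ := by rw [norm_mul, Complex.norm_intCast]
      _ ≤ T := hT j hj

lemma gAux_sup (C : ℕ → (ℤ →₀ ℤ)) (A B D : ℝ) (hB : 0 < B) (hD : 0 < D)
    (hnorm : ∀ k : ℕ, 1 ≤ k → laurentL1 (C k) ≤ Real.exp (A * k + B * Real.log k))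
    (hsupp : ∀ k : ℕ, 1 ≤ k → ∀ j ∈ (C k).support, |(j : ℝ)| ≤ D * (k : ℝ) ^ 2)
    {ρ : ℝ} (hρ0 : 0 < ρ) (hρ1 : ρ ≤ 1)
    (hρ2 : 72 * ρ ^ 2 ≤ Real.exp (-(A + B + D + 1)))
    (k : ℕ) (hk : 1 ≤ k) (α : ℂ) (hα : ‖α‖ ≤ ρ)
    (z : ℂ) (hz : ‖z‖ = ρ / k) :
    ‖gAux C k α z‖ ≤ Real.exp (-(k : ℝ)) := by
  have hk0 : (0 : ℝ) < k := by exact_mod_cast hk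
  set ζ := Real.exp (-(A + B + D + 1)) with hζ
  have hζ0 : 0 ≤ ζ := Real.exp_nonneg _
  -- bound on each product factor
  have hfac : ∀ j ∈ Finset.Icc 1 k,
      ‖(Complex.exp (α / 2) - Complex.exp (-α / 2)) ^ 2
        - (Complex.exp ((j : ℂ) * z / 2) - Complex.exp (-((j : ℂ) * z / 2))) ^ 2‖ ≤ ζ := by
    intro j hj
    obtain ⟨hj1, hj2⟩ := Finset.mem_Icc.mp hj
    have habs_s : ‖Complex.exp (α / 2) - Complex.exp (-α / 2)‖ ≤ 6 * ρ := by
      have h := sinh_bd (α / 2) (by rw [norm_div]; simpa using by linarith)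
      rw [neg_div]
      refine h.trans ?_
      rw [norm_div]
      simp only [Complex.norm_two]
      linarith
    have habs_t : ‖Complex.exp ((j : ℂ) * z / 2)
        - Complex.exp (-((j : ℂ) * z / 2))‖ ≤ 6 * ρ := by
      have hjz : ‖(j : ℂ) * z / 2‖ = j * (ρ / k) / 2 := by
        rw [norm_div, norm_mul, hz, Complex.norm_natCast, Complex.norm_two]
      have hjk : (j : ℝ) * (ρ / k) ≤ ρ := by
        rw [mul_div_assoc']
        rw [div_le_iff₀ hk0]
        have : (j : ℝ) ≤ k := by exact_mod_cast hj2
        nlinarith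
      have h := sinh_bd ((j : ℂ) * z / 2) (by rw [hjz]; linarith)
      refine h.trans ?_
      rw [hjz]
      linarith
    calc ‖(Complex.exp (α / 2) - Complex.exp (-α / 2)) ^ 2
          - (Complex.exp ((j : ℂ) * z / 2) - Complex.exp (-((j : ℂ) * z / 2))) ^ 2‖
        ≤ ‖(Complex.exp (α / 2) - Complex.exp (-α / 2)) ^ 2‖
          + ‖(Complex.exp ((j : ℂ) * z / 2)
              - Complex.exp (-((j : ℂ) * z / 2))) ^ 2‖ := by
          rw [sub_eq_add_neg]
          exact (norm_add_le _ _).trans (by rw [norm_neg])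
      _ ≤ (6 * ρ) ^ 2 + (6 * ρ) ^ 2 := by
          rw [norm_pow, norm_pow]
          gcongr <;> first | exact norm_nonneg _ | assumption
      _ ≤ ζ := by nlinarith
  have hprod : ‖∏ j ∈ Finset.Icc 1 k,
      ((Complex.exp (α / 2) - Complex.exp (-α / 2)) ^ 2
        - (Complex.exp ((j : ℂ) * z / 2) - Complex.exp (-((j : ℂ) * z / 2))) ^ 2)‖ ≤ ζ ^ k := by
    rw [norm_prod]
    calc ∏ j ∈ Finset.Icc 1 k, ‖_‖ ≤ ∏ _j ∈ Finset.Icc 1 k, ζ :=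
        Finset.prod_le_prod (fun j _ => norm_nonneg _) hfac
      _ = ζ ^ k := by rw [Finset.prod_const, Nat.card_Icc]; norm_num
  have hL : ‖laurentEval (C k) (Complex.exp z)‖
      ≤ Real.exp (A * k + B * Real.log k) * Real.exp (D * k) := by
    have h1 : ‖laurentEval (C k) (Complex.exp z)‖
        ≤ laurentL1 (C k) * Real.exp (D * k) := by
      refine laurent_bd (C k) z (fun j hj => ?_)
      rw [hz]
      calc |(j : ℝ)| * (ρ / k) ≤ D * (k : ℝ) ^ 2 * (ρ / k) := by
            refine mul_le_mul_of_nonneg_right (hsupp k hk j hj) (by positivity)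
        _ = D * k * ρ := by field_simp
        _ ≤ D * k := by nlinarith [mul_pos hD hk0]
    refine h1.trans ?_
    refine mul_le_mul_of_nonneg_right (hnorm k hk) (Real.exp_nonneg _)
  rw [gAux, norm_mul]
  have hlogk : Real.log k ≤ k := (Real.log_le_sub_one_of_pos hk0).trans (by linarith)
  calc ‖_‖ * ‖laurentEval (C k) (Complex.exp z)‖
      ≤ ζ ^ k * (Real.exp (A * k + B * Real.log k) * Real.exp (D * k)) := by
        refine mul_le_mul hprod hL (norm_nonneg _) (by positivity)
    _ = Real.exp ((k : ℝ) * (-(A + B + D + 1)) + (A * k + B * Real.log k) + D * k) := by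
        rw [hζ, ← Real.exp_nat_mul, ← Real.exp_add, ← Real.exp_add]
        ring_nf
    _ ≤ Real.exp (-(k : ℝ)) := by
        refine Real.exp_le_exp.2 ?_
        nlinarith [mul_le_mul_of_nonneg_left hlogk hB.le]


/-- Under the growth hypotheses on `(C_k)`, there is an open neighborhood `U`
of `0` such that for every `N ≥ 1` there is `M'_N > 0` with: for all `n ≥ 1` and `α ∈ U`,
the series `∑_{k=0}^{∞} ∑_{j=0}^{N−1} (1/j!) ∂^j_ε g_k(α,0) (α/n)^j` converges absolutely and
its tail beyond `k = n` is bounded in absolute value by `M'_N`. -/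
theorem taylor_tail_bound (C : ℕ → (ℤ →₀ ℤ)) (A B D : ℝ)
    (hA : 0 < A) (hB : 0 < B) (hD : 0 < D)
    (hnorm : ∀ k : ℕ, 1 ≤ k → laurentL1 (C k) ≤ Real.exp (A * k + B * Real.log k))
    (hsupp : ∀ k : ℕ, 1 ≤ k → ∀ j ∈ (C k).support, |(j : ℝ)| ≤ D * (k : ℝ) ^ 2) :
    ∃ U : Set ℂ, IsOpen U ∧ 0 ∈ U ∧
      ∀ N : ℕ, 1 ≤ N → ∃ M : ℝ, 0 < M ∧
        ∀ n : ℕ, 1 ≤ n → ∀ α ∈ U,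
          (Summable (fun k : ℕ =>
            ‖∑ j ∈ Finset.range N,
              (1 / (j.factorial : ℂ)) * iteratedDeriv j (gAux C k α) 0 * (α / n) ^ j‖)) ∧
          ‖∑' k : ℕ,
            ∑ j ∈ Finset.range N,
              (1 / (j.factorial : ℂ)) * iteratedDeriv j (gAux C (n + 1 + k) α) 0 *
                (α / n) ^ j‖ ≤ M := by
  set ζ : ℝ := Real.exp (-(A + B + D + 1)) with hζ
  have hζ0 : 0 < ζ := Real.exp_pos _
  set ρ : ℝ := min 1 (Real.sqrt ζ / 9) with hρ
  have hρ0 : 0 < ρ := lt_min one_pos (by positivity)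
  have hρ1 : ρ ≤ 1 := min_le_left _ _
  have hρ2 : 72 * ρ ^ 2 ≤ ζ := by
    have h1 : ρ ≤ Real.sqrt ζ / 9 := min_le_right _ _
    have h2 : ρ ^ 2 ≤ (Real.sqrt ζ / 9) ^ 2 := by
      exact pow_le_pow_left₀ hρ0.le h1 2
    have h3 : (Real.sqrt ζ / 9) ^ 2 = ζ / 81 := by
      rw [div_pow, Real.sq_sqrt hζ0.le]; norm_num
    nlinarith
  refine ⟨Metric.ball 0 ρ, Metric.isOpen_ball, Metric.mem_ball_self hρ0, ?_⟩
  intro N hN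
  -- the dominating sequence
  set b : ℕ → ℝ := fun k => (N : ℝ) * ((k : ℝ) ^ N * Real.exp (-1) ^ k) with hbdef
  have hb0 : ∀ k, 0 ≤ b k := fun k => by positivity
  have hb : Summable b := by
    apply Summable.mul_left
    exact summable_pow_mul_geometric_of_norm_lt_one N
      (by rw [Real.norm_eq_abs, abs_of_pos (Real.exp_pos _)]
          exact Real.exp_lt_one_iff.2 (by norm_num))
  refine ⟨(∑' k, b k) + 1, by have : 0 ≤ ∑' k, b k := tsum_nonneg hb0; linarith, ?_⟩
  intro n hn α hα
  rw [Metric.mem_ball, dist_zero_right] at hα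
  have hαρ : ‖α‖ ≤ ρ := le_of_lt hα
  -- the key pointwise bound
  have key : ∀ k : ℕ, 1 ≤ k →
      ‖∑ j ∈ Finset.range N,
        (1 / (j.factorial : ℂ)) * iteratedDeriv j (gAux C k α) 0 * (α / n) ^ j‖ ≤ b k := by
    intro k hk
    have hk0 : (0 : ℝ) < k := by exact_mod_cast hk
    have hk1 : (1 : ℝ) ≤ k := by exact_mod_cast hk
    have hR : 0 < ρ / k := by positivity
    have hder : ∀ j : ℕ, ‖iteratedDeriv j (gAux C k α) 0‖
        ≤ j.factorial * Real.exp (-(k : ℝ)) / (ρ / k) ^ j := by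
      intro j
      exact cauchy_est (gAux_diff C k α) hR
        (fun z hz => gAux_sup C A B D hB hD hnorm hsupp hρ0 hρ1 hρ2 k hk α hαρ z hz) j
    have hαn : ‖α / (n : ℂ)‖ ≤ ρ := by
      rw [norm_div, Complex.norm_natCast]
      have hn1 : (1 : ℝ) ≤ n := by exact_mod_cast hn
      have hds : ‖α‖ / (n : ℝ) ≤ ‖α‖ :=
        div_le_self (norm_nonneg _) hn1
      linarith
    calc ‖∑ j ∈ Finset.range N,
          (1 / (j.factorial : ℂ)) * iteratedDeriv j (gAux C k α) 0 * (α / n) ^ j‖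
        ≤ ∑ j ∈ Finset.range N, ‖
            (1 / (j.factorial : ℂ)) * iteratedDeriv j (gAux C k α) 0 * (α / n) ^ j‖ :=
          norm_sum_le _ _
      _ ≤ ∑ j ∈ Finset.range N, Real.exp (-(k : ℝ)) * (k : ℝ) ^ N := by
          refine Finset.sum_le_sum fun j hj => ?_
          have hjN : j ≤ N := (Finset.mem_range.mp hj).le
          have e1 : ‖(1 / (j.factorial : ℂ)) * iteratedDeriv j (gAux C k α) 0
              * (α / n) ^ j‖ = (1 / (j.factorial : ℝ))
              * ‖iteratedDeriv j (gAux C k α) 0‖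
              * ‖α / (n : ℂ)‖ ^ j := by
            rw [norm_mul, norm_mul, norm_pow, norm_div, norm_one, Complex.norm_natCast]
          rw [e1]
          have step1 : (1 / (j.factorial : ℝ))
              * ‖iteratedDeriv j (gAux C k α) 0‖
              * ‖α / (n : ℂ)‖ ^ j
              ≤ (1 / (j.factorial : ℝ))
                * (j.factorial * Real.exp (-(k : ℝ)) / (ρ / k) ^ j) * ρ ^ j := by
            gcongr <;> first
              | exact norm_nonneg _ | exact hder j | exact hαn | positivity
          refine step1.trans ?_
          have e2 : (1 / (j.factorial : ℝ))
              * (j.factorial * Real.exp (-(k : ℝ)) / (ρ / k) ^ j) * ρ ^ j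
              = Real.exp (-(k : ℝ)) * (k : ℝ) ^ j := by
            have hfac : (0 : ℝ) < j.factorial := by exact_mod_cast j.factorial_pos
            rw [div_pow]
            field_simp
          rw [e2]
          gcongr <;> first
            | exact Real.exp_nonneg _ | exact hk1 | exact hjN | positivity
      _ = (N : ℝ) * ((k : ℝ) ^ N * Real.exp (-(k : ℝ))) := by
          rw [Finset.sum_const, Finset.card_range]
          push_cast
          ring
      _ = b k := by
          rw [hbdef]
          congr 1
          congr 1
          rw [← Real.exp_nat_mul]
          congr 1
          ring
  constructor
  · rw [← summable_nat_add_iff 1]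
    refine Summable.of_nonneg_of_le (fun k => norm_nonneg _)
      (fun k => key (k + 1) (by omega)) ?_
    exact (summable_nat_add_iff 1).2 hb
  · -- tail bound
    set F : ℕ → ℂ := fun k => ∑ j ∈ Finset.range N,
      (1 / (j.factorial : ℂ)) * iteratedDeriv j (gAux C k α) 0 * (α / (n : ℂ)) ^ j with hF
    have hsumabs : Summable (fun k => ‖F (n + 1 + k)‖) := by
      refine Summable.of_nonneg_of_le (fun k => norm_nonneg _) (fun k => ?_)
        ((summable_nat_add_iff (n + 1)).2 hb |>.congr (fun k => by rw [add_comm]))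
      exact key (n + 1 + k) (by omega)
    have hbs : Summable (fun k => b (n + 1 + k)) :=
      ((summable_nat_add_iff (n + 1)).2 hb).congr (fun k => by rw [add_comm])
    calc ‖∑' k : ℕ, F (n + 1 + k)‖ = ‖∑' k : ℕ, F (n + 1 + k)‖ := rfl
      _ ≤ ∑' k : ℕ, ‖F (n + 1 + k)‖ := norm_tsum_le_tsum_norm hsumabs
      _ ≤ ∑' k : ℕ, b (n + 1 + k) := by
          refine Summable.tsum_le_tsum (fun k => ?_) hsumabs hbs
          exact key (n + 1 + k) (by omega)
      _ ≤ ∑' k, b k := by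
          have h := Summable.sum_add_tsum_nat_add (f := b) (n + 1) hb
          have hpos : 0 ≤ ∑ i ∈ Finset.range (n + 1), b i :=
            Finset.sum_nonneg fun i _ => hb0 i
          have heq : (∑' k : ℕ, b (n + 1 + k)) = ∑' k : ℕ, b (k + (n + 1)) :=
            tsum_congr fun k => by rw [add_comm]
          linarith [h, heq ▸ le_refl (∑' k : ℕ, b (n + 1 + k))]
      _ ≤ (∑' k, b k) + 1 := by linarith
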